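/- arXiv:0907.0798 — 2 statements merged into one kernel-verified Lean document; each statement's English description precedes it below -/
import Mathlib

section
/- Let T : Fin m → Fin m → ℝ be symmetric with trace zero and let σ_{m-1} denote the volume of the unit sphere in ℝ^m. Then ∫_{S_r^{m-1}} ∑_{i,j,k,l} T_{ij} T_{kl} y_i y_j y_k y_l dσ_r(y) = (2 σ_{m-1} / ((m+2)m)) r^{m+3} ∑_{i,j} T_{ij}². -/
open MeasureTheory Metric
open scoped NNReal ENNReal Pointwise

namespace Stmt9Aux

noncomputable section

abbrev Eu (m : ℕ) := EuclideanSpace ℝ (Fin m)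

variable {m : ℕ}

lemma contC (i : Fin m) : Continuous fun y : Eu m => y i :=
  (continuous_apply i).comp (PiLp.continuous_ofLp (p := 2) (β := fun _ : Fin m => ℝ))

lemma coord_le_norm (x : Eu m) (i : Fin m) : |x i| ≤ ‖x‖ := by
  rw [EuclideanSpace.norm_eq, ← Real.sqrt_sq_eq_abs]
  apply Real.sqrt_le_sqrt
  have := Finset.single_le_sum (f := fun j => ‖x j‖ ^ 2) (fun j _ => sq_nonneg _)
    (Finset.mem_univ i)
  simpa [Real.norm_eq_abs, sq_abs] using this

lemma sum_sq_of_mem_sphere {x : Eu m} (hx : x ∈ sphere (0 : Eu m) 1) :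
    ∑ i, x i * x i = 1 := by
  have h : ‖x‖ = 1 := by simpa using hx
  have h2 := PiLp.norm_sq_eq_of_L2 (fun _ : Fin m => ℝ) x
  rw [h] at h2
  have : ∑ i, x i * x i = ∑ i, ‖x i‖ ^ 2 := by
    refine Finset.sum_congr rfl fun i _ => ?_
    simp [Real.norm_eq_abs, sq_abs, sq]
  rw [this, ← h2]; norm_num

/-- Generic construction of a linear isometry equivalence of Euclidean space from an
involutive norm-preserving linear map. -/
def mkLIE (g : Eu m → Eu m) (hadd : ∀ x y, g (x + y) = g x + g y)
    (hsmul : ∀ (c : ℝ) x, g (c • x) = c • g x) (hinv : ∀ x, g (g x) = x)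
    (hn : ∀ x, ‖g x‖ = ‖x‖) : Eu m ≃ₗᵢ[ℝ] Eu m :=
  { toLinearEquiv :=
      { toFun := g, invFun := g, left_inv := hinv, right_inv := hinv,
        map_add' := hadd, map_smul' := hsmul },
    norm_map' := hn }

lemma mkLIE_apply (g : Eu m → Eu m) (hadd hsmul hinv hn) (x : Eu m) :
    mkLIE g hadd hsmul hinv hn x = g x := rfl

/-- Sign flip of one coordinate. -/
def flipLIE (i : Fin m) : Eu m ≃ₗᵢ[ℝ] Eu m := by
  refine mkLIE (fun x => (WithLp.toLp 2 (fun a => if a = i then -x a else x a) : Eu m)) ?_ ?_ ?_ ?_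
  · intro x y; ext a; by_cases h : a = i <;> simp [h] <;> try ring
  · intro c x; ext a; by_cases h : a = i <;> simp [h] <;> try ring
  · intro x; ext a; by_cases h : a = i <;> simp [h]
  · intro x
    rw [EuclideanSpace.norm_eq, EuclideanSpace.norm_eq]
    congr 1
    refine Finset.sum_congr rfl fun a _ => ?_
    by_cases h : a = i <;> simp [h]

lemma flipLIE_apply (i : Fin m) (x : Eu m) (a : Fin m) :
    flipLIE i x a = if a = i then -x a else x a := rfl

/-- Swap of two coordinates. -/
def swapLIE (i j : Fin m) : Eu m ≃ₗᵢ[ℝ] Eu m := by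
  refine mkLIE (fun x => (WithLp.toLp 2 (fun a => x (Equiv.swap i j a)) : Eu m)) ?_ ?_ ?_ ?_
  · intro x y; ext a; simp
  · intro c x; ext a; simp
  · intro x; ext a; exact congrArg x (Equiv.swap_apply_self i j a)
  · intro x
    rw [EuclideanSpace.norm_eq, EuclideanSpace.norm_eq]
    congr 1
    exact Equiv.sum_comp (Equiv.swap i j) (fun a => ‖x a‖ ^ 2)

lemma swapLIE_apply (i j : Fin m) (x : Eu m) (a : Fin m) :
    swapLIE i j x a = x (Equiv.swap i j a) := rfl

/-- Rotation by 45 degrees in the (i,j) coordinate plane (an involution). -/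
def rotLIE (i j : Fin m) (hij : i ≠ j) : Eu m ≃ₗᵢ[ℝ] Eu m := by
  have h2 : Real.sqrt 2 * Real.sqrt 2 = 2 := Real.mul_self_sqrt (by norm_num)
  have hs : Real.sqrt 2 ≠ 0 := by positivity
  refine mkLIE (fun x => (WithLp.toLp 2 (fun a => if a = i then (x i + x j) / Real.sqrt 2
      else if a = j then (x i - x j) / Real.sqrt 2 else x a) : Eu m)) ?_ ?_ ?_ ?_
  · intro x y; ext a
    by_cases h : a = i
    · subst h; simp [hij]; try ring
    · by_cases h' : a = j
      · subst h'; simp [h, Ne.symm hij]; try ring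
      · simp [h, h']
  · intro c x; ext a
    by_cases h : a = i
    · subst h; simp [hij]; try ring
    · by_cases h' : a = j
      · subst h'; simp [h, Ne.symm hij]; try ring
      · simp [h, h']
  · intro x; ext a
    by_cases h : a = i
    · subst h
      simp only [if_pos rfl, if_neg hij, if_neg (Ne.symm hij), ↓reduceIte]
      field_simp
      rw [sq, h2]; ring
    · by_cases h' : a = j
      · subst h'
        simp only [if_pos rfl, if_neg h, if_neg hij, if_neg (Ne.symm hij), ↓reduceIte]
        field_simp
        rw [sq, h2]; ring
      · simp [h, h']
  · intro x
    rw [EuclideanSpace.norm_eq, EuclideanSpace.norm_eq]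
    congr 1
    have key : ∀ a : Fin m,
        ‖(if a = i then (x i + x j) / Real.sqrt 2
          else if a = j then (x i - x j) / Real.sqrt 2 else x a)‖ ^ 2
        = ‖x a‖ ^ 2
          + (if a = i then ((x i + x j) / Real.sqrt 2) ^ 2 - (x i) ^ 2 else 0)
          + (if a = j then ((x i - x j) / Real.sqrt 2) ^ 2 - (x j) ^ 2 else 0) := by
      intro a
      by_cases h : a = i
      · subst h
        simp only [eq_self_iff_true, if_true, if_neg hij, Real.norm_eq_abs, sq_abs]
        ring
      · by_cases h' : a = j
        · subst h'
          simp only [eq_self_iff_true, if_true, if_neg h, Real.norm_eq_abs, sq_abs]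
          ring
        · simp only [if_neg h, if_neg h', Real.norm_eq_abs, sq_abs]
          ring
    rw [Finset.sum_congr rfl (fun a _ => key a), Finset.sum_add_distrib,
      Finset.sum_add_distrib, Finset.sum_ite_eq' Finset.univ i,
      Finset.sum_ite_eq' Finset.univ j]
    simp only [Finset.mem_univ, if_true]
    have hu : ((x i + x j) / Real.sqrt 2) ^ 2 = (x i + x j) ^ 2 / 2 := by
      rw [div_pow]; congr 1; rw [sq, h2]
    have hv : ((x i - x j) / Real.sqrt 2) ^ 2 = (x i - x j) ^ 2 / 2 := by
      rw [div_pow]; congr 1; rw [sq, h2]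
    rw [hu, hv]; ring

lemma rotLIE_apply_fst (i j : Fin m) (hij : i ≠ j) (x : Eu m) :
    rotLIE i j hij x i = (x i + x j) / Real.sqrt 2 := by
  show (if i = i then (x i + x j) / Real.sqrt 2
      else if i = j then (x i - x j) / Real.sqrt 2 else x i) = _
  simp

/-- Invariance of spherical integrals w.r.t. Hausdorff measure under linear isometries. -/
lemma integral_comp_LIE (d : ℝ) (g : Eu m ≃ₗᵢ[ℝ] Eu m) (f : Eu m → ℝ)
    (hf : Continuous f) :
    ∫ y in sphere (0 : Eu m) 1, f (g y) ∂μH[d] = ∫ y in sphere (0 : Eu m) 1, f y ∂μH[d] := by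
  have hme : MeasurableEmbedding (g : Eu m → Eu m) :=
    g.toHomeomorph.measurableEmbedding
  have hpre : (g : Eu m → Eu m) ⁻¹' (sphere (0 : Eu m) 1) = sphere (0 : Eu m) 1 := by
    ext x
    simp [mem_sphere_iff_norm]
  calc ∫ y in sphere (0 : Eu m) 1, f (g y) ∂μH[d]
      = ∫ y, f y ∂(Measure.map g (μH[d].restrict (sphere (0 : Eu m) 1))) :=
        (integral_map hme.measurable.aemeasurable hf.aestronglyMeasurable).symm
    _ = ∫ y, f y ∂((Measure.map g μH[d]).restrict (sphere (0 : Eu m) 1)) := by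
        rw [hme.restrict_map, hpre]
    _ = _ := by
        have hmap : Measure.map (⇑g) (μH[d] : Measure (Eu m)) = μH[d] :=
          g.toIsometryEquiv.map_hausdorffMeasure d
        rw [hmap]

section Moments

variable (μ : Measure (Eu m)) [IsFiniteMeasure μ]

lemma integ (hsupp : ∀ᵐ y ∂μ, y ∈ sphere (0 : Eu m) 1)
    (f : Eu m → ℝ) (hf : Continuous f) : Integrable f μ := by
  obtain ⟨C, hC⟩ := (isCompact_sphere (0 : Eu m) 1).exists_bound_of_continuousOn
    hf.continuousOn
  refine (integrable_const C).mono' hf.aestronglyMeasurable ?_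
  filter_upwards [hsupp] with y hy using hC y hy

lemma odd_vanish
    (hinv : ∀ (g : Eu m ≃ₗᵢ[ℝ] Eu m) (f : Eu m → ℝ), Continuous f →
      ∫ y, f (g y) ∂μ = ∫ y, f y ∂μ)
    (i j k l : Fin m) (h1 : j ≠ i) (h2 : j ≠ k) (h3 : j ≠ l) :
    ∫ y, y i * y j * y k * y l ∂μ = 0 := by
  have hc : Continuous fun y : Eu m => y i * y j * y k * y l :=
    (((contC i).mul (contC j)).mul (contC k)).mul (contC l)
  have H := hinv (flipLIE j) _ hc
  have heq : ∫ y, (flipLIE j y) i * (flipLIE j y) j * (flipLIE j y) k * (flipLIE j y) l ∂μ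
      = ∫ y, -(y i * y j * y k * y l) ∂μ := by
    refine integral_congr_ae (Filter.Eventually.of_forall fun y => ?_)
    simp only [flipLIE_apply, if_neg (Ne.symm h1), if_neg (Ne.symm h2),
      if_neg (Ne.symm h3), eq_self_iff_true, if_true]
    ring
  have H2 := heq.symm.trans H
  rw [integral_neg] at H2
  linarith

lemma sq_swap
    (hinv : ∀ (g : Eu m ≃ₗᵢ[ℝ] Eu m) (f : Eu m → ℝ), Continuous f →
      ∫ y, f (g y) ∂μ = ∫ y, f y ∂μ)
    (i j : Fin m) :
    ∫ y, y i * y i ∂μ = ∫ y, y j * y j ∂μ := by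
  have hc : Continuous fun y : Eu m => y i * y i := (contC i).mul (contC i)
  have H := hinv (swapLIE i j) _ hc
  have heq : ∫ y, (swapLIE i j y) i * (swapLIE i j y) i ∂μ = ∫ y, y j * y j ∂μ := by
    refine integral_congr_ae (Filter.Eventually.of_forall fun y => ?_)
    have hswap : (Equiv.swap i j) i = j := Equiv.swap_apply_left i j
    simp only [swapLIE_apply]
    exact congrArg (fun t => y t * y t) hswap
  exact (heq.symm.trans H).symm

lemma quart_swap
    (hinv : ∀ (g : Eu m ≃ₗᵢ[ℝ] Eu m) (f : Eu m → ℝ), Continuous f →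
      ∫ y, f (g y) ∂μ = ∫ y, f y ∂μ)
    (i j : Fin m) :
    ∫ y, y i * y i * y i * y i ∂μ = ∫ y, y j * y j * y j * y j ∂μ := by
  have hc : Continuous fun y : Eu m => y i * y i * y i * y i :=
    (((contC i).mul (contC i)).mul (contC i)).mul (contC i)
  have H := hinv (swapLIE i j) _ hc
  have heq : ∫ y, (swapLIE i j y) i * (swapLIE i j y) i *
      (swapLIE i j y) i * (swapLIE i j y) i ∂μ = ∫ y, y j * y j * y j * y j ∂μ := by
    refine integral_congr_ae (Filter.Eventually.of_forall fun y => ?_)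
    have hswap : (Equiv.swap i j) i = j := Equiv.swap_apply_left i j
    simp only [swapLIE_apply]
    exact congrArg (fun t => y t * y t * y t * y t) hswap
  exact (heq.symm.trans H).symm

lemma sq_moment
    (hinv : ∀ (g : Eu m ≃ₗᵢ[ℝ] Eu m) (f : Eu m → ℝ), Continuous f →
      ∫ y, f (g y) ∂μ = ∫ y, f y ∂μ)
    (hsupp : ∀ᵐ y ∂μ, y ∈ sphere (0 : Eu m) 1)
    (hm : 1 ≤ m) (i : Fin m) :
    (m : ℝ) * ∫ y, y i * y i ∂μ = (μ Set.univ).toReal := by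
  have h1 : ∑ j, ∫ y, y j * y j ∂μ = (μ Set.univ).toReal := by
    rw [← integral_finset_sum _ (fun j _ => integ μ hsupp (fun y => y j * y j) ((contC j).mul (contC j)))]
    have : ∫ y, ∑ j, y j * y j ∂μ = ∫ _, (1 : ℝ) ∂μ := by
      refine integral_congr_ae ?_
      filter_upwards [hsupp] with y hy using sum_sq_of_mem_sphere hy
    rw [this, integral_const, smul_eq_mul, mul_one]; rfl
  rw [Finset.sum_congr rfl (fun j _ => sq_swap μ hinv j i), Finset.sum_const,
    Finset.card_univ, Fintype.card_fin, nsmul_eq_mul] at h1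
  exact h1

/-- The 45 degree rotation identity: `A = 3 B`. -/
lemma quart_eq_three_pair
    (hinv : ∀ (g : Eu m ≃ₗᵢ[ℝ] Eu m) (f : Eu m → ℝ), Continuous f →
      ∫ y, f (g y) ∂μ = ∫ y, f y ∂μ)
    (hsupp : ∀ᵐ y ∂μ, y ∈ sphere (0 : Eu m) 1)
    (i j : Fin m) (hij : i ≠ j) :
    ∫ y, y i * y i * y i * y i ∂μ = 3 * ∫ y, y i * y i * y j * y j ∂μ := by
  have hc : Continuous fun y : Eu m => y i * y i * y i * y i :=
    (((contC i).mul (contC i)).mul (contC i)).mul (contC i)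
  have H := hinv (rotLIE i j hij) _ hc
  have h2 : Real.sqrt 2 * Real.sqrt 2 = 2 := Real.mul_self_sqrt (by norm_num)
  -- expand the rotated integrand
  have hexp : ∫ y, (rotLIE i j hij y) i * (rotLIE i j hij y) i *
      (rotLIE i j hij y) i * (rotLIE i j hij y) i ∂μ
      = ∫ y, ((1/4 : ℝ) * (y i * y i * y i * y i) + (y i * y j * y i * y i)
          + (3/2 : ℝ) * (y i * y i * y j * y j) + (y j * y i * y j * y j)
          + (1/4 : ℝ) * (y j * y j * y j * y j)) ∂μ := by
    refine integral_congr_ae (Filter.Eventually.of_forall fun y => ?_)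
    beta_reduce
    rw [rotLIE_apply_fst]
    set a := y i
    set b := y j
    have e1 : ((a + b) / Real.sqrt 2) * ((a + b) / Real.sqrt 2)
        = (a + b) * (a + b) / 2 := by
      rw [div_mul_div_comm, h2]
    calc ((a + b) / Real.sqrt 2) * ((a + b) / Real.sqrt 2) *
          ((a + b) / Real.sqrt 2) * ((a + b) / Real.sqrt 2)
        = (((a + b) / Real.sqrt 2) * ((a + b) / Real.sqrt 2)) *
          (((a + b) / Real.sqrt 2) * ((a + b) / Real.sqrt 2)) := by ring
      _ = ((a + b) * (a + b) / 2) * ((a + b) * (a + b) / 2) := by rw [e1]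
      _ = _ := by ring
  have H5 : ∫ y, ((1/4 : ℝ) * (y i * y i * y i * y i) + (y i * y j * y i * y i)
      + (3/2 : ℝ) * (y i * y i * y j * y j) + (y j * y i * y j * y j)
      + (1/4 : ℝ) * (y j * y j * y j * y j)) ∂μ
      = ∫ y, y i * y i * y i * y i ∂μ := hexp.symm.trans H
  -- integrability of the pieces
  have i1 : Integrable (fun y : Eu m => (1/4 : ℝ) * (y i * y i * y i * y i)) μ :=
    (integ μ hsupp _ ((((contC i).mul (contC i)).mul (contC i)).mul (contC i))).const_mul _
  have i2 : Integrable (fun y : Eu m => y i * y j * y i * y i) μ :=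
    integ μ hsupp _ ((((contC i).mul (contC j)).mul (contC i)).mul (contC i))
  have i3 : Integrable (fun y : Eu m => (3/2 : ℝ) * (y i * y i * y j * y j)) μ :=
    (integ μ hsupp _ ((((contC i).mul (contC i)).mul (contC j)).mul (contC j))).const_mul _
  have i4 : Integrable (fun y : Eu m => y j * y i * y j * y j) μ :=
    integ μ hsupp _ ((((contC j).mul (contC i)).mul (contC j)).mul (contC j))
  have i5 : Integrable (fun y : Eu m => (1/4 : ℝ) * (y j * y j * y j * y j)) μ :=
    (integ μ hsupp _ ((((contC j).mul (contC j)).mul (contC j)).mul (contC j))).const_mul _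
  have i12 : Integrable (fun y : Eu m => (1/4 : ℝ) * (y i * y i * y i * y i)
      + (y i * y j * y i * y i)) μ := i1.add i2
  have i123 : Integrable (fun y : Eu m => (1/4 : ℝ) * (y i * y i * y i * y i)
      + (y i * y j * y i * y i) + (3/2 : ℝ) * (y i * y i * y j * y j)) μ := i12.add i3
  have i1234 : Integrable (fun y : Eu m => (1/4 : ℝ) * (y i * y i * y i * y i)
      + (y i * y j * y i * y i) + (3/2 : ℝ) * (y i * y i * y j * y j)
      + (y j * y i * y j * y j)) μ := i123.add i4
  rw [integral_add i1234 i5, integral_add i123 i4, integral_add i12 i3,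
    integral_add i1 i2, integral_const_mul, integral_const_mul, integral_const_mul] at H5
  have hodd1 : ∫ y, y i * y j * y i * y i ∂μ = 0 :=
    odd_vanish μ hinv i j i i hij.symm hij.symm hij.symm
  have hodd2 : ∫ y, y j * y i * y j * y j ∂μ = 0 :=
    odd_vanish μ hinv j i j j hij hij hij
  have hq : ∫ y, y j * y j * y j * y j ∂μ = ∫ y, y i * y i * y i * y i ∂μ :=
    quart_swap μ hinv j i
  rw [hodd1, hodd2, hq] at H5
  linarith

lemma pair_value
    (hinv : ∀ (g : Eu m ≃ₗᵢ[ℝ] Eu m) (f : Eu m → ℝ), Continuous f →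
      ∫ y, f (g y) ∂μ = ∫ y, f y ∂μ)
    (hsupp : ∀ᵐ y ∂μ, y ∈ sphere (0 : Eu m) 1)
    (hm : 1 ≤ m) (i j : Fin m) (hij : i ≠ j) :
    ∫ y, y i * y i * y j * y j ∂μ = (μ Set.univ).toReal / (((m : ℝ) + 2) * m) := by
  set σ₀ := (μ Set.univ).toReal with hσ₀
  set A := ∫ y, y i * y i * y i * y i ∂μ with hA
  set S := ∫ y, y i * y i ∂μ with hS
  have hsum : ∑ k, ∫ y, y i * y i * y k * y k ∂μ = S := by
    rw [← integral_finset_sum _ (fun k _ => integ μ hsupp (fun y => y i * y i * y k * y k)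
      ((((contC i).mul (contC i)).mul (contC k)).mul (contC k)))]
    refine integral_congr_ae ?_
    filter_upwards [hsupp] with y hy
    have : ∑ k, y i * y i * y k * y k = (y i * y i) * ∑ k, y k * y k := by
      rw [Finset.mul_sum]; exact Finset.sum_congr rfl fun k _ => by ring
    rw [this, sum_sq_of_mem_sphere hy, mul_one]
  have hconst : ∀ k ∈ Finset.univ \ {i},
      ∫ y, y i * y i * y k * y k ∂μ = A / 3 := by
    intro k hk
    have hki : i ≠ k := by
      simp only [Finset.mem_sdiff, Finset.mem_singleton] at hk
      exact fun h => hk.2 h.symm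
    have := quart_eq_three_pair μ hinv hsupp i k hki
    rw [← hA] at this; linarith
  rw [Finset.sum_eq_sum_sdiff_singleton_add (Finset.mem_univ i),
    Finset.sum_congr rfl hconst, Finset.sum_const] at hsum
  have hcard : (Finset.univ \ {i} : Finset (Fin m)).card = m - 1 := by
    rw [Finset.card_sdiff_of_subset (by simp)]; simp
  rw [hcard, nsmul_eq_mul] at hsum
  -- the i-term in hsum is ∫ y_i^4 = A
  have hterm : ∫ y, y i * y i * y i * y i ∂μ = A := rfl
  rw [hterm] at hsum
  have hMS := sq_moment μ hinv hsupp hm i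
  rw [← hS, ← hσ₀] at hMS
  have hB := quart_eq_three_pair μ hinv hsupp i j hij
  rw [← hA] at hB
  have hm' : (1 : ℝ) ≤ (m : ℝ) := by exact_mod_cast hm
  have hcast : ((m - 1 : ℕ) : ℝ) = (m : ℝ) - 1 := by
    rw [Nat.cast_sub hm]; simp
  rw [hcast] at hsum
  have hmne : ((m : ℝ) + 2) * m ≠ 0 := by positivity
  rw [eq_div_iff hmne]
  linear_combination (m : ℝ) * hsum + hMS - ((m : ℝ) * ((m : ℝ) + 2) / 3) * hB

lemma moment_formula
    (hinv : ∀ (g : Eu m ≃ₗᵢ[ℝ] Eu m) (f : Eu m → ℝ), Continuous f →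
      ∫ y, f (g y) ∂μ = ∫ y, f y ∂μ)
    (hsupp : ∀ᵐ y ∂μ, y ∈ sphere (0 : Eu m) 1)
    (hm2 : 2 ≤ m) (i j k l : Fin m) :
    ∫ y, y i * y j * y k * y l ∂μ =
      (μ Set.univ).toReal / (((m : ℝ) + 2) * m) *
        ((if i = j then (1:ℝ) else 0) * (if k = l then (1:ℝ) else 0)
          + (if i = k then (1:ℝ) else 0) * (if j = l then (1:ℝ) else 0)
          + (if i = l then (1:ℝ) else 0) * (if j = k then (1:ℝ) else 0)) := by
  have hm : 1 ≤ m := le_trans (by norm_num) hm2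
  set B := (μ Set.univ).toReal / (((m : ℝ) + 2) * m) with hB
  have reord : ∀ (a b c d a' b' c' d' : Fin m),
      (∀ y : Eu m, y a * y b * y c * y d = y a' * y b' * y c' * y d') →
      ∫ y, y a * y b * y c * y d ∂μ = ∫ y, y a' * y b' * y c' * y d' ∂μ := by
    intro a b c d a' b' c' d' h
    exact integral_congr_ae (Filter.Eventually.of_forall fun y => h y)
  by_cases hij : i = j
  · subst hij
    by_cases hkl : k = l
    · subst hkl
      by_cases hik : i = k
      · subst hik
        have hnt : ∃ b : Fin m, b ≠ i := by
          have : Nontrivial (Fin m) :=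
            ⟨⟨⟨0, by omega⟩, ⟨1, by omega⟩, by simp [Fin.ext_iff]⟩⟩
          exact exists_ne i
        obtain ⟨b, hb⟩ := hnt
        rw [quart_eq_three_pair μ hinv hsupp i b (Ne.symm hb),
          pair_value μ hinv hsupp hm i b (Ne.symm hb)]
        simp [hB]
        try ring
      · rw [pair_value μ hinv hsupp hm i k hik]
        simp [hik]
        try ring
    · by_cases hik : i = k
      · subst hik
        have h0 : ∫ y, y i * y i * y i * y l ∂μ = 0 := by
          rw [reord i i i l i l i i (fun y => by ring)]
          exact odd_vanish μ hinv i l i i (fun h => hkl h.symm) (fun h => hkl h.symm)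
            (fun h => hkl h.symm)
        rw [h0]
        simp [hkl]
      · by_cases hil : i = l
        · subst hil
          have h0 : ∫ y, y i * y i * y k * y i ∂μ = 0 := by
            rw [reord i i k i i k i i (fun y => by ring)]
            exact odd_vanish μ hinv i k i i (Ne.symm hik) (Ne.symm hik) (Ne.symm hik)
          rw [h0]
          simp [hkl, hik]
        · have h0 : ∫ y, y i * y i * y k * y l ∂μ = 0 := by
            rw [reord i i k l i k i l (fun y => by ring)]
            exact odd_vanish μ hinv i k i l (fun h => hik h.symm) (fun h => hik h.symm)
              hkl
          rw [h0]
          simp [hkl, hik, hil]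
  · by_cases hik : i = k
    · subst hik
      by_cases hjl : j = l
      · subst hjl
        rw [reord i j i j i i j j (fun y => by ring),
          pair_value μ hinv hsupp hm i j hij]
        have hji : ¬ (j = i) := fun h => hij h.symm
        simp [hij, hji]
        try ring
      · have h0 : ∫ y, y i * y j * y i * y l ∂μ = 0 := by
          rw [reord i j i l i j i l (fun y => by ring)]
          exact odd_vanish μ hinv i j i l (fun h => hij h.symm) (fun h => hij h.symm) hjl
        rw [h0]
        have hji : ¬ (j = i) := fun h => hij h.symm
        simp [hij, hjl, hji]
    · by_cases hil : i = l
      · subst hil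
        by_cases hjk : j = k
        · subst hjk
          rw [reord i j j i i i j j (fun y => by ring),
            pair_value μ hinv hsupp hm i j hij]
          simp [hij, hik]
          try ring
        · have h0 : ∫ y, y i * y j * y k * y i ∂μ = 0 := by
            rw [reord i j k i i j k i (fun y => by ring)]
            exact odd_vanish μ hinv i j k i (fun h => hij h.symm) hjk
              (fun h => hij h.symm)
          rw [h0]
          simp [hij, hik, hjk]
      · have h0 : ∫ y, y i * y j * y k * y l ∂μ = 0 := by
          rw [reord i j k l j i k l (fun y => by ring)]
          exact odd_vanish μ hinv j i k l hij hik hil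
        rw [h0]
        simp [hij, hik, hil]

lemma key_sum
    (hinv : ∀ (g : Eu m ≃ₗᵢ[ℝ] Eu m) (f : Eu m → ℝ), Continuous f →
      ∫ y, f (g y) ∂μ = ∫ y, f y ∂μ)
    (hsupp : ∀ᵐ y ∂μ, y ∈ sphere (0 : Eu m) 1)
    (hm2 : 2 ≤ m) (T : Fin m → Fin m → ℝ)
    (hsymm : ∀ i j, T i j = T j i) (htr : ∑ i, T i i = 0) :
    ∫ y, (∑ i, ∑ j, ∑ k, ∑ l, T i j * T k l * y i * y j * y k * y l) ∂μ
      = 2 * (μ Set.univ).toReal / (((m : ℝ) + 2) * m) * ∑ i, ∑ j, T i j ^ 2 := by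
  classical
  have hci : ∀ i j k l : Fin m,
      Continuous fun y : Eu m => T i j * T k l * y i * y j * y k * y l := fun i j k l =>
    (((continuous_const.mul (contC i)).mul (contC j)).mul (contC k)).mul (contC l)
  have step : ∀ (F : Fin m → Eu m → ℝ), (∀ i, Continuous (F i)) →
      ∫ y, ∑ i, F i y ∂μ = ∑ i, ∫ y, F i y ∂μ := fun F hF =>
    integral_finset_sum _ (fun i _ => integ μ hsupp _ (hF i))
  rw [step _ (fun i => continuous_finset_sum _ fun j _ => continuous_finset_sum _
    fun k _ => continuous_finset_sum _ fun l _ => hci i j k l)]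
  have h1 : ∀ i : Fin m, ∫ y, ∑ j, ∑ k, ∑ l, T i j * T k l * y i * y j * y k * y l ∂μ
      = ∑ j, ∫ y, ∑ k, ∑ l, T i j * T k l * y i * y j * y k * y l ∂μ := fun i =>
    step _ (fun j => continuous_finset_sum _ fun k _ => continuous_finset_sum _
      fun l _ => hci i j k l)
  have h2 : ∀ (i j : Fin m), ∫ y, ∑ k, ∑ l, T i j * T k l * y i * y j * y k * y l ∂μ
      = ∑ k, ∫ y, ∑ l, T i j * T k l * y i * y j * y k * y l ∂μ := fun i j =>
    step _ (fun k => continuous_finset_sum _ fun l _ => hci i j k l)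
  have h3 : ∀ (i j k : Fin m), ∫ y, ∑ l, T i j * T k l * y i * y j * y k * y l ∂μ
      = ∑ l, ∫ y, T i j * T k l * y i * y j * y k * y l ∂μ := fun i j k =>
    step _ (fun l => hci i j k l)
  simp only [h1, h2, h3]
  set B := (μ Set.univ).toReal / (((m : ℝ) + 2) * m) with hB
  have hterm : ∀ i j k l : Fin m,
      ∫ y, T i j * T k l * y i * y j * y k * y l ∂μ
        = T i j * T k l * (B *
          ((if i = j then (1:ℝ) else 0) * (if k = l then (1:ℝ) else 0)
            + (if i = k then (1:ℝ) else 0) * (if j = l then (1:ℝ) else 0)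
            + (if i = l then (1:ℝ) else 0) * (if j = k then (1:ℝ) else 0))) := by
    intro i j k l
    have : ∫ y, T i j * T k l * y i * y j * y k * y l ∂μ
        = T i j * T k l * ∫ y, y i * y j * y k * y l ∂μ := by
      rw [← integral_const_mul]
      exact integral_congr_ae (Filter.Eventually.of_forall fun y => by ring)
    rw [this, moment_formula μ hinv hsupp hm2 i j k l]
  simp only [hterm]
  -- now pure finite sum algebra
  have expand : ∀ i j k l : Fin m,
      T i j * T k l * (B *
        ((if i = j then (1:ℝ) else 0) * (if k = l then (1:ℝ) else 0)
          + (if i = k then (1:ℝ) else 0) * (if j = l then (1:ℝ) else 0)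
          + (if i = l then (1:ℝ) else 0) * (if j = k then (1:ℝ) else 0)))
      = B * ((if i = j then (1:ℝ) else 0) * (if k = l then T i j * T k l else 0))
        + B * ((if i = k then (1:ℝ) else 0) * (if j = l then T i j * T k l else 0))
        + B * ((if i = l then (1:ℝ) else 0) * (if j = k then T i j * T k l else 0)) := by
    intro i j k l
    split_ifs <;> ring
  simp only [expand]
  have hsplit : (∑ i, ∑ j, ∑ k, ∑ l : Fin m,
      (B * ((if i = j then (1:ℝ) else 0) * (if k = l then T i j * T k l else 0))
        + B * ((if i = k then (1:ℝ) else 0) * (if j = l then T i j * T k l else 0))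
        + B * ((if i = l then (1:ℝ) else 0) * (if j = k then T i j * T k l else 0))))
      = B * (∑ i, ∑ j, ∑ k, ∑ l : Fin m,
          ((if i = j then (1:ℝ) else 0) * (if k = l then T i j * T k l else 0)))
        + B * (∑ i, ∑ j, ∑ k, ∑ l : Fin m,
          ((if i = k then (1:ℝ) else 0) * (if j = l then T i j * T k l else 0)))
        + B * (∑ i, ∑ j, ∑ k, ∑ l : Fin m,
          ((if i = l then (1:ℝ) else 0) * (if j = k then T i j * T k l else 0))) := by
    simp only [Finset.mul_sum, Finset.sum_add_distrib]
  -- evaluate the three delta sums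
  have S1 : ∑ i, ∑ j, ∑ k, ∑ l : Fin m,
      ((if i = j then (1:ℝ) else 0) * (if k = l then T i j * T k l else 0)) = 0 := by
    have inner : ∀ i j : Fin m, ∑ k, ∑ l : Fin m,
        ((if i = j then (1:ℝ) else 0) * (if k = l then T i j * T k l else 0))
        = (if i = j then (1:ℝ) else 0) * ∑ k, T i j * T k k := by
      intro i j
      rw [Finset.mul_sum]
      refine Finset.sum_congr rfl fun k _ => ?_
      rw [← Finset.mul_sum]
      congr 1
      simp [Finset.sum_ite_eq Finset.univ k (fun l => T i j * T k l)]
    simp only [inner]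
    have outer : ∀ i : Fin m, ∑ j : Fin m,
        (if i = j then (1:ℝ) else 0) * ∑ k, T i j * T k k
        = T i i * ∑ k, T k k := by
      intro i
      rw [Finset.sum_eq_single i]
      · simp [Finset.mul_sum]
      · intro b _ hb; rw [if_neg (Ne.symm hb), zero_mul]
      · intro h; exact absurd (Finset.mem_univ i) h
    simp only [outer, htr, mul_zero, Finset.sum_const_zero]
  have S2 : ∑ i, ∑ j, ∑ k, ∑ l : Fin m,
      ((if i = k then (1:ℝ) else 0) * (if j = l then T i j * T k l else 0))
      = ∑ i, ∑ j, T i j ^ 2 := by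
    refine Finset.sum_congr rfl fun i _ => ?_
    refine Finset.sum_congr rfl fun j _ => ?_
    have inner : ∀ k : Fin m, ∑ l : Fin m,
        ((if i = k then (1:ℝ) else 0) * (if j = l then T i j * T k l else 0))
        = (if i = k then (1:ℝ) else 0) * (T i j * T k j) := by
      intro k
      rw [← Finset.mul_sum]
      congr 1
      simp [Finset.sum_ite_eq Finset.univ j (fun l => T i j * T k l)]
    simp only [inner]
    rw [Finset.sum_eq_single i]
    · simp [sq]
    · intro b _ hb; rw [if_neg (Ne.symm hb), zero_mul]
    · intro h; exact absurd (Finset.mem_univ i) h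
  have S3 : ∑ i, ∑ j, ∑ k, ∑ l : Fin m,
      ((if i = l then (1:ℝ) else 0) * (if j = k then T i j * T k l else 0))
      = ∑ i, ∑ j, T i j ^ 2 := by
    refine Finset.sum_congr rfl fun i _ => ?_
    refine Finset.sum_congr rfl fun j _ => ?_
    have inner : ∀ k : Fin m, ∑ l : Fin m,
        ((if i = l then (1:ℝ) else 0) * (if j = k then T i j * T k l else 0))
        = (if j = k then (1:ℝ) else 0) * (T i j * T k i) := by
      intro k
      by_cases hjk : j = k <;> simp [hjk]
    simp only [inner]
    rw [Finset.sum_eq_single j]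
    · rw [if_pos rfl, one_mul, hsymm j i, sq]
    · intro b _ hb; rw [if_neg (Ne.symm hb), zero_mul]
    · intro h; exact absurd (Finset.mem_univ j) h
  rw [hsplit, S1, S2, S3, hB]
  ring

end Moments

/-- Scaling: integral over the sphere of radius `r`. -/
lemma integral_sphere_smul (d : ℝ) (hd : 0 ≤ d) {r : ℝ} (hr : 0 < r)
    (f : Eu m → ℝ) (hf : Continuous f) :
    ∫ y in sphere (0 : Eu m) r, f y ∂μH[d] =
      (r ^ d) * ∫ y in sphere (0 : Eu m) 1, f (r • y) ∂μH[d] := by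
  have hrne : r ≠ 0 := ne_of_gt hr
  have hsm : Measurable fun y : Eu m => r • y := measurable_const_smul r
  have key : μH[d].restrict (sphere (0 : Eu m) r) =
      (ENNReal.ofReal (r ^ d)) •
        Measure.map (fun y : Eu m => r • y) (μH[d].restrict (sphere (0 : Eu m) 1)) := by
    ext A hA
    rw [Measure.restrict_apply hA, Measure.smul_apply,
      Measure.map_apply hsm hA, Measure.restrict_apply (hsm hA)]
    have hset : (fun y : Eu m => r • y) ⁻¹' A ∩ sphere (0 : Eu m) 1
        = r⁻¹ • (A ∩ sphere (0 : Eu m) r) := by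
      ext x
      rw [Set.mem_smul_set_iff_inv_smul_mem₀ (inv_ne_zero hrne)]
      simp only [inv_inv, Set.mem_inter_iff, Set.mem_preimage, mem_sphere_iff_norm,
        sub_zero, norm_smul, Real.norm_eq_abs, abs_of_pos hr]
      constructor
      · rintro ⟨h1, h2⟩; exact ⟨h1, by rw [h2, mul_one]⟩
      · rintro ⟨h1, h2⟩; exact ⟨h1, by
          have := h2; field_simp at this ⊢; linarith⟩
    rw [hset, Measure.hausdorffMeasure_smul₀ hd (inv_ne_zero hrne)]
    have hnn : ‖r⁻¹‖₊ = ‖r‖₊⁻¹ := nnnorm_inv r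
    rw [hnn]
    have hco : ((‖r‖₊⁻¹ ^ d : ℝ≥0) : ℝ≥0∞) = ((‖r‖₊ : ℝ≥0∞) ^ d)⁻¹ := by
      rw [ENNReal.coe_rpow_of_ne_zero (by simp [hrne]), ENNReal.coe_inv (by simp [hrne]),
        ENNReal.inv_rpow]
    rw [smul_eq_mul, ENNReal.smul_def, smul_eq_mul, hco]
    have hofr : ENNReal.ofReal (r ^ d) = (‖r‖₊ : ℝ≥0∞) ^ d := by
      rw [← ENNReal.ofReal_rpow_of_pos hr, ← enorm_eq_nnnorm, Real.enorm_eq_ofReal (le_of_lt hr)]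
    rw [hofr, ← mul_assoc, ENNReal.mul_inv_cancel, one_mul]
    · simp [hrne]
    · exact ENNReal.rpow_ne_top_of_nonneg hd ENNReal.coe_ne_top
  rw [show ∫ y in sphere (0 : Eu m) r, f y ∂μH[d]
      = ∫ y, f y ∂(μH[d].restrict (sphere (0 : Eu m) r)) from rfl, key,
    integral_smul_measure,
    integral_map hsm.aemeasurable hf.aestronglyMeasurable,
    ENNReal.toReal_ofReal (Real.rpow_nonneg (le_of_lt hr) d), smul_eq_mul]

/-- Finiteness of the Hausdorff measure of the unit sphere. -/
lemma sphere_lt_top (n : ℕ) :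
    μH[(n : ℝ)] (sphere (0 : Eu (n + 1)) 1) < ⊤ := by
  classical
  set m' := n + 1 with hm'
  -- the normalization map is Lipschitz away from the unit ball
  have projLip : LipschitzOnWith 2 (fun x : Eu m' => ‖x‖⁻¹ • x) {x : Eu m' | 1 ≤ ‖x‖} := by
    refine LipschitzOnWith.of_dist_le_mul fun x hx y hy => ?_
    simp only [Set.mem_setOf_eq] at hx hy
    have hxpos : (0:ℝ) < ‖x‖ := lt_of_lt_of_le one_pos hx
    have hypos : (0:ℝ) < ‖y‖ := lt_of_lt_of_le one_pos hy
    rw [dist_eq_norm, dist_eq_norm]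
    have hid : ‖x‖⁻¹ • x - ‖y‖⁻¹ • y
        = ‖x‖⁻¹ • (x - y) + (‖x‖⁻¹ - ‖y‖⁻¹) • y := by
      rw [smul_sub, sub_smul]; abel
    rw [hid]
    have h1 : ‖‖x‖⁻¹ • (x - y)‖ ≤ ‖x - y‖ := by
      rw [norm_smul, Real.norm_eq_abs, abs_of_pos (inv_pos.mpr hxpos)]
      calc ‖x‖⁻¹ * ‖x - y‖ ≤ 1 * ‖x - y‖ := by
            apply mul_le_mul_of_nonneg_right _ (norm_nonneg _)
            rw [inv_le_one_iff₀]; right; exact hx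
        _ = ‖x - y‖ := one_mul _
    have h2 : ‖(‖x‖⁻¹ - ‖y‖⁻¹) • y‖ ≤ ‖x - y‖ := by
      rw [norm_smul, Real.norm_eq_abs]
      have hxy : |‖y‖ - ‖x‖| ≤ ‖x - y‖ := by
        rw [abs_sub_comm]
        exact (abs_norm_sub_norm_le x y)
      have he : ‖x‖⁻¹ - ‖y‖⁻¹ = (‖y‖ - ‖x‖) / (‖x‖ * ‖y‖) := by
        field_simp
      rw [he, abs_div, abs_of_pos (mul_pos hxpos hypos)]
      have hstep : |‖y‖ - ‖x‖| / (‖x‖ * ‖y‖) * ‖y‖ = |‖y‖ - ‖x‖| / ‖x‖ := by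
        field_simp
      rw [hstep]
      calc |‖y‖ - ‖x‖| / ‖x‖ ≤ |‖y‖ - ‖x‖| := div_le_self (abs_nonneg _) hx
        _ ≤ ‖x - y‖ := hxy
    calc ‖‖x‖⁻¹ • (x - y) + (‖x‖⁻¹ - ‖y‖⁻¹) • y‖
        ≤ ‖‖x‖⁻¹ • (x - y)‖ + ‖(‖x‖⁻¹ - ‖y‖⁻¹) • y‖ := norm_add_le _ _
      _ ≤ ‖x - y‖ + ‖x - y‖ := add_le_add h1 h2
      _ = 2 * ‖x - y‖ := by ring
  set ins : Fin m' → ℝ → (Fin n → ℝ) → Eu m' := fun i s y =>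
    (WithLp.equiv 2 (Fin m' → ℝ)).symm (Fin.insertNth i s y) with hins
  have hins_apply : ∀ (i : Fin m') (s : ℝ) (y : Fin n → ℝ) (a : Fin m'),
      ins i s y a = Fin.insertNth (α := fun _ => ℝ) i s y a := by
    intro i s y a
    rw [hins]
    rfl
  set proj : Eu m' → Eu m' := fun x => ‖x‖⁻¹ • x with hproj
  set sq : ℝ≥0 := ⟨Real.sqrt n, Real.sqrt_nonneg n⟩ with hsq
  have insLip : ∀ (i : Fin m') (s : ℝ), LipschitzWith sq (ins i s) := by
    intro i s
    refine LipschitzWith.of_dist_le_mul fun y y' => ?_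
    rw [EuclideanSpace.dist_eq]
    have hsum : ∑ a, dist (ins i s y a) (ins i s y' a) ^ 2
        ≤ (n : ℝ) * dist y y' ^ 2 := by
      rw [Fin.sum_univ_succAbove _ i]
      simp only [hins_apply, Fin.insertNth_apply_same, Fin.insertNth_apply_succAbove,
        dist_self]
      rw [zero_pow (by norm_num), zero_add]
      calc ∑ j : Fin n, dist (y j) (y' j) ^ 2
          ≤ ∑ _j : Fin n, dist y y' ^ 2 := by
            refine Finset.sum_le_sum fun j _ => ?_
            have := dist_le_pi_dist y y' j
            exact pow_le_pow_left₀ dist_nonneg this 2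
        _ = (n : ℝ) * dist y y' ^ 2 := by
            rw [Finset.sum_const, Finset.card_univ, Fintype.card_fin, nsmul_eq_mul]
    calc Real.sqrt (∑ a, dist (ins i s y a) (ins i s y' a) ^ 2)
        ≤ Real.sqrt ((n : ℝ) * dist y y' ^ 2) := Real.sqrt_le_sqrt hsum
      _ = Real.sqrt n * dist y y' := by
          rw [Real.sqrt_mul (Nat.cast_nonneg n), Real.sqrt_sq dist_nonneg]
  set C : Set (Fin n → ℝ) := Metric.closedBall 0 1 with hCdef
  have mapsTo : ∀ (i : Fin m') (s : ℝ), s = 1 ∨ s = -1 →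
      Set.MapsTo (ins i s) C {x : Eu m' | 1 ≤ ‖x‖} := by
    intro i s hs y _
    have h1 : |ins i s y i| = 1 := by
      rw [hins_apply, Fin.insertNth_apply_same]
      rcases hs with h | h <;> simp [h]
    have := coord_le_norm (ins i s y) i
    simp only [Set.mem_setOf_eq]
    rw [h1] at this
    exact this
  set K : ℝ≥0 := 2 * sq with hKdef
  have lipF : ∀ (i : Fin m') (s : ℝ), s = 1 ∨ s = -1 →
      LipschitzOnWith K (proj ∘ ins i s) C := fun i s hs =>
    projLip.comp ((insLip i s).lipschitzOnWith) (mapsTo i s hs)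
  have cover : sphere (0 : Eu m') 1 ⊆
      ⋃ p : Fin m' × Bool, (proj ∘ ins p.1 (if p.2 then (1:ℝ) else -1)) '' C := by
    intro x hx
    have hx1 : ‖x‖ = 1 := by simpa using hx
    obtain ⟨i, -, hi⟩ := Finset.exists_max_image Finset.univ (fun a => |x a|)
      Finset.univ_nonempty
    have hxi : x i ≠ 0 := by
      intro h0
      have hone : (1:ℝ) = ∑ a, ‖x a‖ ^ 2 := by
        rw [← PiLp.norm_sq_eq_of_L2, hx1]; norm_num
      have hz : ∑ a, ‖x a‖ ^ 2 = 0 := Finset.sum_eq_zero fun a _ => by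
        have ha := hi a (Finset.mem_univ a)
        rw [h0, abs_zero] at ha
        have : x a = 0 := abs_eq_zero.mp (le_antisymm ha (abs_nonneg _))
        simp [this]
      rw [hz] at hone; norm_num at hone
    set t := x i with htdef
    have htpos : 0 < |t| := abs_pos.mpr hxi
    refine Set.mem_iUnion.mpr ⟨(i, decide (0 < t)), ?_⟩
    set s : ℝ := if (decide (0 < t) : Bool) then (1:ℝ) else -1 with hsdef
    have hst : s = t * |t|⁻¹ := by
      by_cases h : 0 < t
      · rw [hsdef]; simp [h, abs_of_pos h, mul_inv_cancel₀ (ne_of_gt h)]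
      · have hneg : t < 0 := lt_of_le_of_ne (not_lt.mp h) hxi
        rw [hsdef]
        simp only [h, decide_false, Bool.false_eq_true, if_false]
        rw [abs_of_neg hneg]
        field_simp
    refine ⟨fun j => x (i.succAbove j) * |t|⁻¹, ?_, ?_⟩
    · rw [hCdef, mem_closedBall_zero_iff]
      rw [pi_norm_le_iff_of_nonneg zero_le_one]
      intro j
      rw [Real.norm_eq_abs, abs_mul, abs_inv, abs_abs]
      rw [mul_inv_le_iff₀ htpos, one_mul]
      exact hi _ (Finset.mem_univ _)
    · have hinseq : ins i s (fun j => x (i.succAbove j) * |t|⁻¹) = |t|⁻¹ • x := by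
        ext a
        refine Fin.succAboveCases i ?_ ?_ a
        · rw [hins_apply, Fin.insertNth_apply_same]
          rw [PiLp.smul_apply, smul_eq_mul, hst, ← htdef, mul_comm]
        · intro j
          rw [hins_apply, Fin.insertNth_apply_succAbove]
          rw [PiLp.smul_apply, smul_eq_mul, mul_comm]
      show proj (ins i s _) = x
      rw [hinseq, hproj]
      have hn : ‖(|t|⁻¹ • x : Eu m')‖ = |t|⁻¹ := by
        rw [norm_smul, hx1, mul_one, Real.norm_eq_abs, abs_inv, abs_abs]
      show ‖(|t|⁻¹ • x : Eu m')‖⁻¹ • (|t|⁻¹ • x) = x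
      rw [hn, inv_inv, smul_smul, mul_inv_cancel₀ (ne_of_gt htpos), one_smul]
  have hHpi : (μH[(n : ℝ)] : Measure (Fin n → ℝ)) = volume := by
    have := MeasureTheory.hausdorffMeasure_pi_real (ι := Fin n)
    simpa using this
  have piece : ∀ p : Fin m' × Bool,
      μH[(n : ℝ)] ((proj ∘ ins p.1 (if p.2 then (1:ℝ) else -1)) '' C) < ⊤ := by
    intro p
    have hlip := lipF p.1 (if p.2 then (1:ℝ) else -1) (by cases p.2 <;> simp)
    refine lt_of_le_of_lt (hlip.hausdorffMeasure_image_le (Nat.cast_nonneg n)) ?_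
    rw [hHpi]
    have h1 : ((K : ℝ≥0∞)) ^ (n : ℝ) < ⊤ :=
      ENNReal.rpow_lt_top_of_nonneg (Nat.cast_nonneg n) ENNReal.coe_ne_top
    have h2 : volume C < ⊤ := by
      rw [hCdef]
      exact (isCompact_closedBall _ _).measure_lt_top
    exact ENNReal.mul_lt_top h1 h2
  calc μH[(n : ℝ)] (sphere (0 : Eu m') 1)
      ≤ ∑' p : Fin m' × Bool,
          μH[(n : ℝ)] ((proj ∘ ins p.1 (if p.2 then (1:ℝ) else -1)) '' C) :=
        le_trans (measure_mono cover) (measure_iUnion_le _)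
    _ < ⊤ := by
        rw [tsum_fintype]
        exact ENNReal.sum_lt_top.mpr fun p _ => piece p

end

end Stmt9Aux

theorem stmt9 (m : ℕ) (hm : 1 ≤ m) (r : ℝ) (hr : 0 < r)
    (T : Fin m → Fin m → ℝ)
    (hsymm : ∀ i j, T i j = T j i) (htr : ∑ i, T i i = 0)
    (σ : ℝ)
    (hσ : σ = (μH[(m - 1 : ℝ)] (Metric.sphere (0 : EuclideanSpace ℝ (Fin m)) 1)).toReal) :
    ∫ y in Metric.sphere (0 : EuclideanSpace ℝ (Fin m)) r,
        (∑ i, ∑ j, ∑ k, ∑ l, T i j * T k l * y i * y j * y k * y l) ∂μH[(m - 1 : ℝ)] =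
      (2 * σ / (((m : ℝ) + 2) * m)) * r ^ (m + 3) * ∑ i, ∑ j, (T i j) ^ 2 := by
  classical
  open Stmt9Aux in
  rcases eq_or_lt_of_le hm with h1 | h2
  · -- m = 1 : T is identically zero
    have hm1 : m = 1 := h1.symm
    subst hm1
    have hT : ∀ i j : Fin 1, T i j = 0 := by
      intro i j
      have hi : i = 0 := Subsingleton.elim i 0
      have hj : j = 0 := Subsingleton.elim j 0
      rw [hi, hj]
      simpa using htr
    simp [hT]
  · -- m ≥ 2
    have hm2 : 2 ≤ m := h2
    obtain ⟨n, rfl⟩ : ∃ n, m = n + 1 := ⟨m - 1, by omega⟩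
    set d : ℝ := ((n + 1 : ℕ) : ℝ) - 1 with hddef
    have hdn : d = (n : ℝ) := by rw [hddef]; push_cast; ring
    have hfin : μH[d] (Metric.sphere (0 : Eu (n + 1)) 1) < ⊤ := by
      rw [hdn]; exact sphere_lt_top n
    have hcont : Continuous fun y : Eu (n + 1) => ∑ i, ∑ j, ∑ k, ∑ l,
        T i j * T k l * y i * y j * y k * y l := by
      refine continuous_finset_sum _ fun i _ => continuous_finset_sum _ fun j _ =>
        continuous_finset_sum _ fun k _ => continuous_finset_sum _ fun l _ => ?_
      exact (((continuous_const.mul (contC i)).mul (contC j)).mul (contC k)).mul (contC l)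
    rw [integral_sphere_smul d (by rw [hdn]; positivity) hr _ hcont]
    have hsc : ∀ y : Eu (n + 1),
        (∑ i, ∑ j, ∑ k, ∑ l, T i j * T k l * (r • y) i * (r • y) j * (r • y) k * (r • y) l)
          = r ^ 4 * ∑ i, ∑ j, ∑ k, ∑ l, T i j * T k l * y i * y j * y k * y l := by
      intro y
      simp only [PiLp.smul_apply, smul_eq_mul]
      rw [Finset.mul_sum]
      refine Finset.sum_congr rfl fun i _ => ?_
      rw [Finset.mul_sum]
      refine Finset.sum_congr rfl fun j _ => ?_
      rw [Finset.mul_sum]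
      refine Finset.sum_congr rfl fun k _ => ?_
      rw [Finset.mul_sum]
      refine Finset.sum_congr rfl fun l _ => ?_
      ring
    have hmid : ∫ y in Metric.sphere (0 : Eu (n + 1)) 1,
        (∑ i, ∑ j, ∑ k, ∑ l,
          T i j * T k l * (r • y) i * (r • y) j * (r • y) k * (r • y) l) ∂μH[d]
        = r ^ 4 * ∫ y in Metric.sphere (0 : Eu (n + 1)) 1,
            (∑ i, ∑ j, ∑ k, ∑ l, T i j * T k l * y i * y j * y k * y l) ∂μH[d] := by
      rw [← integral_const_mul]
      exact integral_congr_ae (Filter.Eventually.of_forall fun y => hsc y)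
    rw [show (∫ y in Metric.sphere (0 : Eu (n + 1)) 1,
        (fun z : Eu (n + 1) => ∑ i, ∑ j, ∑ k, ∑ l,
          T i j * T k l * z i * z j * z k * z l) (r • y) ∂μH[d]) =
        ∫ y in Metric.sphere (0 : Eu (n + 1)) 1,
        (∑ i, ∑ j, ∑ k, ∑ l,
          T i j * T k l * (r • y) i * (r • y) j * (r • y) k * (r • y) l) ∂μH[d] from rfl,
      hmid]
    set μ : Measure (Eu (n + 1)) := μH[d].restrict (Metric.sphere (0 : Eu (n + 1)) 1)
      with hμdef
    haveI : IsFiniteMeasure μ := by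
      constructor
      rw [hμdef, Measure.restrict_apply_univ]
      exact hfin
    have hinv : ∀ (g : Eu (n + 1) ≃ₗᵢ[ℝ] Eu (n + 1)) (f : Eu (n + 1) → ℝ),
        Continuous f → ∫ y, f (g y) ∂μ = ∫ y, f y ∂μ := fun g f hf =>
      integral_comp_LIE d g f hf
    have hsupp : ∀ᵐ y ∂μ, y ∈ Metric.sphere (0 : Eu (n + 1)) 1 :=
      ae_restrict_mem Metric.isClosed_sphere.measurableSet
    have hkey := key_sum μ hinv hsupp hm2 T hsymm htr
    have hμuniv : (μ Set.univ).toReal = σ := by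
      rw [hμdef, Measure.restrict_apply_univ, hσ]
    rw [show (∫ y in Metric.sphere (0 : Eu (n + 1)) 1,
        (∑ i, ∑ j, ∑ k, ∑ l, T i j * T k l * y i * y j * y k * y l) ∂μH[d])
        = ∫ y, (∑ i, ∑ j, ∑ k, ∑ l, T i j * T k l * y i * y j * y k * y l) ∂μ from rfl,
      hkey, hμuniv]
    have hrw : r ^ d * r ^ 4 = r ^ (n + 1 + 3) := by
      rw [hdn, Real.rpow_natCast, ← pow_add]
      try (congr 1; omega)
    rw [← mul_assoc, ← mul_assoc, hrw]
    try ring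
end

section
/- For n ≥ 3 and any ε > 0, ∫_{ℝⁿ₊} |∇U_ε|² dx = (n-2) ∫_{∂ℝⁿ₊} U_ε^{2(n-1)/(n-2)} dx̄, where U_ε(x) = (ε/(|x̄|²+(ε+x_n)²))^{(n-2)/2}. -/
open MeasureTheory Set Module

set_option maxHeartbeats 1000000

/-- Integrability from domination by `(‖x‖² + c²)⁻ᵏ`. -/
lemma aux_integrable {E : Type*} [NormedAddCommGroup E] [NormedSpace ℝ E]
    [MeasurableSpace E] [BorelSpace E] [FiniteDimensional ℝ E]
    (μ : Measure E) [μ.IsAddHaarMeasure] {c : ℝ} (hc : 0 < c) {k : ℕ}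
    (hk : finrank ℝ E < 2 * k) {f : E → ℝ}
    (hf : AEStronglyMeasurable f μ)
    (hbound : ∀ x, |f x| ≤ ((‖x‖ ^ 2 + c ^ 2)⁻¹) ^ k) :
    Integrable f μ := by
  have hr : (finrank ℝ E : ℝ) < (2 * k : ℝ) := by exact_mod_cast hk
  set M : ℝ := (2 * max 1 (c ^ 2)⁻¹) ^ k with hM
  refine ((integrable_one_add_norm (μ := μ) (r := 2 * k) hr).const_mul M).mono' hf
    (Filter.Eventually.of_forall fun x => ?_)
  have ha : (0 : ℝ) < ‖x‖ ^ 2 + c ^ 2 := by positivity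
  have hb : (0 : ℝ) < (1 + ‖x‖) ^ 2 := by positivity
  have h1 : (1 + ‖x‖) ^ 2 ≤ (‖x‖ ^ 2 + c ^ 2) * (2 * max 1 (c ^ 2)⁻¹) := by
    have hm1 : (1 : ℝ) ≤ max 1 (c ^ 2)⁻¹ := le_max_left _ _
    have hm2 : (c ^ 2)⁻¹ ≤ max 1 (c ^ 2)⁻¹ := le_max_right _ _
    have h3 : (1 : ℝ) ≤ c ^ 2 * max 1 (c ^ 2)⁻¹ := by
      calc (1 : ℝ) = c ^ 2 * (c ^ 2)⁻¹ := (mul_inv_cancel₀ (by positivity)).symm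
        _ ≤ c ^ 2 * max 1 (c ^ 2)⁻¹ :=
          mul_le_mul_of_nonneg_left hm2 (by positivity)
    have h4 : ‖x‖ ^ 2 ≤ ‖x‖ ^ 2 * max 1 (c ^ 2)⁻¹ := le_mul_of_one_le_right (by positivity) hm1
    nlinarith [sq_nonneg (1 - ‖x‖), norm_nonneg x]
  have h2 : (‖x‖ ^ 2 + c ^ 2)⁻¹ ≤ (2 * max 1 (c ^ 2)⁻¹) * ((1 + ‖x‖) ^ 2)⁻¹ := by
    rw [← div_eq_mul_inv, le_div_iff₀ hb, inv_mul_eq_div, div_le_iff₀ ha]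
    linarith [h1]
  have h0 : (0:ℝ) < 1 + ‖x‖ := by positivity
  have hpow : ((1 : ℝ) + ‖x‖) ^ (-(2 * k : ℝ)) = (((1 + ‖x‖) ^ 2)⁻¹) ^ k := by
    rw [inv_pow, ← pow_mul, ← Real.rpow_natCast (1+‖x‖) (2*k), ← Real.rpow_neg h0.le]
    congr 1
    push_cast
    ring
  calc ‖f x‖ = |f x| := rfl
    _ ≤ ((‖x‖ ^ 2 + c ^ 2)⁻¹) ^ k := hbound x
    _ ≤ ((2 * max 1 (c ^ 2)⁻¹) * ((1 + ‖x‖) ^ 2)⁻¹) ^ k :=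
        pow_le_pow_left₀ (by positivity) h2 k
    _ = M * (1 + ‖x‖) ^ (-(2 * k : ℝ)) := by rw [hpow, mul_pow, hM]

/-- Scaling identity for the basic integral. -/
lemma aux_scaling (m k : ℕ) {c : ℝ} (hc : 0 < c) :
    ∫ y : Fin m → ℝ, ((∑ i, y i ^ 2 + c ^ 2) ^ k)⁻¹ =
      (c ^ (2 * k))⁻¹ * c ^ m * ∫ y : Fin m → ℝ, ((∑ i, y i ^ 2 + 1) ^ k)⁻¹ := by
  have h := Measure.integral_comp_smul (μ := (volume : Measure (Fin m → ℝ)))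
    (fun y : Fin m → ℝ => ((∑ i, y i ^ 2 + c ^ 2) ^ k)⁻¹) c
  have he : ∀ y : Fin m → ℝ,
      ((∑ i, (c • y) i ^ 2 + c ^ 2) ^ k)⁻¹ = (c ^ (2*k))⁻¹ * ((∑ i, y i ^ 2 + 1) ^ k)⁻¹ := by
    intro y
    have : ∑ i, (c • y) i ^ 2 + c ^ 2 = c ^ 2 * (∑ i, y i ^ 2 + 1) := by
      simp only [Pi.smul_apply, smul_eq_mul, mul_pow, ← Finset.mul_sum]
      ring
    rw [this, mul_pow, mul_inv, ← pow_mul]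
  simp only [he] at h
  rw [integral_const_mul, finrank_pi ℝ, Fintype.card_fin] at h
  have hcm : (0:ℝ) < c ^ m := by positivity
  have habs : |((c:ℝ) ^ m)⁻¹| = (c ^ m)⁻¹ := abs_of_pos (by positivity)
  rw [habs, smul_eq_mul] at h
  field_simp at h ⊢
  linarith [h]

theorem stmt13 (n : ℕ) (hn : 3 ≤ n) (ε : ℝ) (hε : 0 < ε)
    (U : EuclideanSpace ℝ (Fin n) → ℝ)
    (hU : ∀ x : EuclideanSpace ℝ (Fin n),
      U x = (ε / (∑ i : Fin (n - 1), (x (Fin.castLE (by omega) i)) ^ 2 +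
          (ε + x ⟨n - 1, by omega⟩) ^ 2)) ^ (((n : ℝ) - 2) / 2)) :
    ∫ x in {x : EuclideanSpace ℝ (Fin n) | 0 ≤ x ⟨n - 1, by omega⟩},
        ∑ i : Fin n, (fderiv ℝ U x (EuclideanSpace.single i 1)) ^ 2 =
      ((n : ℝ) - 2) * ∫ y : EuclideanSpace ℝ (Fin (n - 1)),
        ((ε / (∑ i : Fin (n - 1), (y i) ^ 2 + ε ^ 2)) ^ (((n : ℝ) - 2) / 2)) ^
          ((2 * ((n : ℝ) - 1)) / ((n : ℝ) - 2)) := by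
  obtain ⟨m, rfl⟩ : ∃ m, n = m + 1 := ⟨n - 1, by omega⟩
  have hm : 2 ≤ m := by omega
  simp only [Nat.add_sub_cancel] at hU ⊢
  show ∫ x in {x : EuclideanSpace ℝ (Fin (m+1)) | 0 ≤ x (Fin.last m)},
        ∑ j : Fin (m+1), (fderiv ℝ U x (EuclideanSpace.single j 1)) ^ 2
      = ((↑(m+1) : ℝ) - 2) * ∫ y : EuclideanSpace ℝ (Fin m),
        ((ε / (∑ i : Fin m, y i ^ 2 + ε ^ 2)) ^ (((↑(m+1) : ℝ) - 2) / 2)) ^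
          ((2 * ((↑(m+1) : ℝ) - 1)) / ((↑(m+1) : ℝ) - 2))
  set p : ℝ := ((m : ℝ) - 1) / 2 with hp
  have hm1 : (0:ℝ) < (m:ℝ) - 1 := by
    have : (2:ℝ) ≤ (m:ℝ) := by exact_mod_cast hm
    linarith
  have hphalf : ((↑(m+1) : ℝ) - 2) / 2 = p := by push_cast [hp]; ring
  set g : EuclideanSpace ℝ (Fin (m+1)) → ℝ :=
    fun x => ∑ i : Fin m, x i.castSucc ^ 2 + (ε + x (Fin.last m)) ^ 2 with hg
  have hU' : ∀ x : EuclideanSpace ℝ (Fin (m+1)), U x = (ε / g x) ^ p := by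
    intro x
    rw [hU x, hphalf]; rfl
  -- positivity of g on the half space
  have h_gpos : ∀ x : EuclideanSpace ℝ (Fin (m+1)), 0 ≤ x (Fin.last m) → 0 < g x := by
    intro x hx
    have h1 : 0 < (ε + x (Fin.last m)) ^ 2 := pow_pos (by linarith) 2
    have h2 : 0 ≤ ∑ i : Fin m, x i.castSucc ^ 2 :=
      Finset.sum_nonneg fun i _ => sq_nonneg _
    rw [hg]; positivity
  -- derivative of g
  set Dg : EuclideanSpace ℝ (Fin (m+1)) → (EuclideanSpace ℝ (Fin (m+1)) →L[ℝ] ℝ) :=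
    fun x => (∑ i : Fin m, (2 * x i.castSucc) • (EuclideanSpace.proj i.castSucc :
        EuclideanSpace ℝ (Fin (m+1)) →L[ℝ] ℝ)) +
      (2 * (ε + x (Fin.last m))) • EuclideanSpace.proj (Fin.last m) with hDg
  have hgd : ∀ x : EuclideanSpace ℝ (Fin (m+1)), HasFDerivAt g (Dg x) x := by
    intro x
    have h1 : ∀ i : Fin m, HasFDerivAt (fun y : EuclideanSpace ℝ (Fin (m+1)) => y i.castSucc ^ 2)
        ((2 * x i.castSucc) • (EuclideanSpace.proj i.castSucc :
          EuclideanSpace ℝ (Fin (m+1)) →L[ℝ] ℝ)) x := by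
      intro i
      have e1 : (fun y : EuclideanSpace ℝ (Fin (m+1)) => y i.castSucc ^ 2) =
          fun y => y i.castSucc * y i.castSucc := by funext y; ring
      have e2 : (2 * x i.castSucc) • (EuclideanSpace.proj i.castSucc :
            EuclideanSpace ℝ (Fin (m+1)) →L[ℝ] ℝ) =
          x i.castSucc • EuclideanSpace.proj i.castSucc +
            x i.castSucc • EuclideanSpace.proj i.castSucc := by
        rw [two_mul, add_smul]
      have hp1 : HasFDerivAt (⇑(EuclideanSpace.proj i.castSucc :
            EuclideanSpace ℝ (Fin (m+1)) →L[ℝ] ℝ))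
          (EuclideanSpace.proj i.castSucc :
            EuclideanSpace ℝ (Fin (m+1)) →L[ℝ] ℝ) x :=
        ContinuousLinearMap.hasFDerivAt _
      rw [e1, e2]
      exact hp1.mul hp1
    have h2 : HasFDerivAt (fun y : EuclideanSpace ℝ (Fin (m+1)) => (ε + y (Fin.last m)) ^ 2)
        ((2 * (ε + x (Fin.last m))) • (EuclideanSpace.proj (Fin.last m) :
          EuclideanSpace ℝ (Fin (m+1)) →L[ℝ] ℝ)) x := by
      have hplast : HasFDerivAt (⇑(EuclideanSpace.proj (Fin.last m) :
            EuclideanSpace ℝ (Fin (m+1)) →L[ℝ] ℝ))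
          (EuclideanSpace.proj (Fin.last m) :
            EuclideanSpace ℝ (Fin (m+1)) →L[ℝ] ℝ) x :=
        ContinuousLinearMap.hasFDerivAt _
      have hb : HasFDerivAt (fun y : EuclideanSpace ℝ (Fin (m+1)) => ε + y (Fin.last m))
          (EuclideanSpace.proj (Fin.last m) : EuclideanSpace ℝ (Fin (m+1)) →L[ℝ] ℝ) x :=
        hplast.const_add ε
      have e1 : (fun y : EuclideanSpace ℝ (Fin (m+1)) => (ε + y (Fin.last m)) ^ 2) =
          fun y => (ε + y (Fin.last m)) * (ε + y (Fin.last m)) := by funext y; ring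
      have e2 : (2 * (ε + x (Fin.last m))) • (EuclideanSpace.proj (Fin.last m) :
            EuclideanSpace ℝ (Fin (m+1)) →L[ℝ] ℝ) =
          (ε + x (Fin.last m)) • EuclideanSpace.proj (Fin.last m) +
            (ε + x (Fin.last m)) • EuclideanSpace.proj (Fin.last m) := by
        rw [two_mul, add_smul]
      rw [e1, e2]
      exact hb.mul hb
    exact (HasFDerivAt.fun_sum fun i _ => h1 i).add h2
  -- derivative of U on the half space
  have hfd : ∀ x : EuclideanSpace ℝ (Fin (m+1)), 0 < g x →
      HasFDerivAt U ((ε ^ p * (-p * g x ^ (-p - 1))) • Dg x) x := by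
    intro x hx
    have hgc : Continuous g := by
      rw [continuous_iff_continuousAt]; exact fun y => (hgd y).continuousAt
    have hop : IsOpen {y : EuclideanSpace ℝ (Fin (m+1)) | 0 < g y} :=
      isOpen_lt continuous_const hgc
    have hUV : U =ᶠ[nhds x] fun y => ε ^ p * g y ^ (-p) := by
      filter_upwards [hop.mem_nhds hx] with y hy
      rw [hU' y, Real.div_rpow hε.le (le_of_lt hy), Real.rpow_neg (le_of_lt hy), div_eq_mul_inv]
    have hV : HasFDerivAt (fun y => ε ^ p * g y ^ (-p))
        ((ε ^ p * (-p * g x ^ (-p - 1))) • Dg x) x := by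
      have h := (Real.hasDerivAt_rpow_const (x := g x) (p := -p)
        (Or.inl hx.ne')).comp_hasFDerivAt x (hgd x)
      have h2 := h.const_mul (ε ^ p)
      simp [smul_smul, Function.comp, mul_assoc] at h2 ⊢
      exact h2.congr_fderiv (by ext v; simp)
    exact hV.congr_of_eventuallyEq hUV
  -- evaluation of Dg on basis vectors
  have hB1 : ∀ (x : EuclideanSpace ℝ (Fin (m+1))) (i0 : Fin m),
      Dg x (EuclideanSpace.single i0.castSucc 1) = 2 * x i0.castSucc := by
    intro x i0
    rw [hDg]
    simp only [ContinuousLinearMap.add_apply, ContinuousLinearMap.coe_sum',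
      Finset.sum_apply, ContinuousLinearMap.coe_smul', Pi.smul_apply,
      PiLp.proj_apply, EuclideanSpace.single_apply, smul_eq_mul,
      Fin.castSucc_inj, mul_ite, mul_one, mul_zero]
    rw [Finset.sum_ite_eq' Finset.univ i0 (fun i => 2 * x i.castSucc)]
    simp [(Fin.castSucc_lt_last i0).ne']
  have hB2 : ∀ (x : EuclideanSpace ℝ (Fin (m+1))),
      Dg x (EuclideanSpace.single (Fin.last m) 1) = 2 * (ε + x (Fin.last m)) := by
    intro x
    rw [hDg]
    simp only [ContinuousLinearMap.add_apply, ContinuousLinearMap.coe_sum',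
      Finset.sum_apply, ContinuousLinearMap.coe_smul', Pi.smul_apply,
      PiLp.proj_apply, EuclideanSpace.single_apply, smul_eq_mul,
      mul_ite, mul_one, mul_zero]
    have : ∀ i : Fin m, (if i.castSucc = Fin.last m then 2 * x i.castSucc else 0) = 0 := by
      intro i
      rw [if_neg (Fin.castSucc_lt_last i).ne]
    simp [this]
  set K : ℝ := ((m:ℝ) - 1)^2 * ε ^ (m - 1) with hK
  have hsum : ∀ x : EuclideanSpace ℝ (Fin (m+1)), 0 ≤ x (Fin.last m) →
      ∑ j : Fin (m+1), (fderiv ℝ U x (EuclideanSpace.single j 1)) ^ 2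
        = K * ((g x) ^ m)⁻¹ := by
    intro x hx
    have hgx := h_gpos x hx
    have hfx := (hfd x hgx).fderiv
    have happ : ∀ j : Fin (m+1), fderiv ℝ U x (EuclideanSpace.single j 1)
        = (ε ^ p * (-p * g x ^ (-p - 1))) * Dg x (EuclideanSpace.single j 1) := by
      intro j; rw [hfx]; simp [smul_eq_mul]
    simp only [happ, mul_pow]
    rw [← Finset.mul_sum, Fin.sum_univ_castSucc]
    simp only [hB1, hB2]
    have h4 : ∑ i : Fin m, (2 * x i.castSucc)^2 = 4 * ∑ i : Fin m, x i.castSucc ^ 2 := by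
      rw [Finset.mul_sum]; exact Finset.sum_congr rfl fun i _ => by ring
    have he : (ε ^ p)^2 = ε ^ (m-1 : ℕ) := by
      rw [← Real.rpow_natCast (ε ^ p) 2, ← Real.rpow_mul hε.le, ← Real.rpow_natCast ε (m-1)]
      congr 1
      rw [Nat.cast_sub (by omega : 1 ≤ m), hp]
      push_cast; ring
    have hG : (g x ^ (-p-1))^2 * g x = ((g x)^m)⁻¹ := by
      calc (g x ^ (-p-1))^2 * g x
          = g x ^ ((-p-1) * ((2:ℕ):ℝ)) * g x ^ (1:ℝ) := by
            rw [← Real.rpow_natCast (g x ^ (-p-1)) 2, ← Real.rpow_mul hgx.le, Real.rpow_one]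
        _ = g x ^ ((-p-1) * ((2:ℕ):ℝ) + 1) := by rw [← Real.rpow_add hgx]
        _ = g x ^ (-(m:ℝ)) := by congr 1; rw [hp]; push_cast; ring
        _ = ((g x)^m)⁻¹ := by rw [Real.rpow_neg hgx.le, Real.rpow_natCast]
    have hgval : ∑ i : Fin m, x i.castSucc ^ 2 + (ε + x (Fin.last m))^2 = g x := by rw [hg]
    calc (ε ^ p) ^ 2 * ((-p) ^ 2 * (g x ^ (-p - 1)) ^ 2) *
          (∑ i : Fin m, (2 * x i.castSucc) ^ 2 + (2 * (ε + x (Fin.last m))) ^ 2)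
        = ((ε ^ p)^2 * p^2 * 4) * ((g x ^ (-p-1))^2 * g x) := by
          rw [h4, ← hgval]; ring
      _ = K * ((g x)^m)⁻¹ := by rw [he, hG, hK, hp]; ring
  have hS : MeasurableSet {x : EuclideanSpace ℝ (Fin (m+1)) | 0 ≤ x (Fin.last m)} :=
    measurableSet_le measurable_const
      (EuclideanSpace.proj (Fin.last m) :
        EuclideanSpace ℝ (Fin (m+1)) →L[ℝ] ℝ).continuous.measurable
  have hLHS1 : ∫ x in {x : EuclideanSpace ℝ (Fin (m+1)) | 0 ≤ x (Fin.last m)},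
        ∑ j : Fin (m+1), (fderiv ℝ U x (EuclideanSpace.single j 1)) ^ 2
      = K * ∫ x in {x : EuclideanSpace ℝ (Fin (m+1)) | 0 ≤ x (Fin.last m)},
          ((g x) ^ m)⁻¹ := by
    rw [← integral_const_mul]
    exact setIntegral_congr_fun hS fun x hx => by
      rw [hsum x hx]
  rw [hLHS1]
  -- the measurable equivalence to the product space
  obtain ⟨T, hT⟩ : ∃ T : EuclideanSpace ℝ (Fin (m+1)) ≃ᵐ (ℝ × (Fin m → ℝ)),
      T = (MeasurableEquiv.toLp 2 (Fin (m+1) → ℝ)).symm.trans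
        (MeasurableEquiv.piFinSuccAbove (fun _ => ℝ) (Fin.last m)) := ⟨_, rfl⟩
  have hT1 : ∀ x : EuclideanSpace ℝ (Fin (m+1)), (T x).1 = x (Fin.last m) := by
    intro x
    rw [hT]
    simp [MeasurableEquiv.trans_apply, MeasurableEquiv.piFinSuccAbove_apply,
      MeasurableEquiv.coe_toLp_symm, MeasurableEquiv.toLp_symm_apply]
  have hT2 : ∀ (x : EuclideanSpace ℝ (Fin (m+1))) (i : Fin m), (T x).2 i = x i.castSucc := by
    intro x i
    rw [hT]
    simp [MeasurableEquiv.trans_apply, MeasurableEquiv.piFinSuccAbove_apply,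
      Fin.succAbove_last, MeasurableEquiv.coe_toLp_symm, MeasurableEquiv.toLp_symm_apply, Fin.init]
  have hTmp : MeasurePreserving (⇑T) volume volume := by
    rw [hT, MeasurableEquiv.coe_trans]
    exact (volume_preserving_piFinSuccAbove (fun _ : Fin (m+1) => ℝ) (Fin.last m)).comp
      (EuclideanSpace.volume_preserving_symm_measurableEquiv_toLp (Fin (m+1)))
  set G : ℝ × (Fin m → ℝ) → ℝ :=
    fun z => ((∑ i, z.2 i ^ 2 + (ε + z.1) ^ 2) ^ m)⁻¹ with hG
  have hGcomp : ∀ x : EuclideanSpace ℝ (Fin (m+1)), ((g x) ^ m)⁻¹ = G (T x) := by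
    intro x
    rw [hG, hg]
    simp only [hT1, hT2]
  have hpre : ⇑T ⁻¹' (Ici (0:ℝ) ×ˢ (univ : Set (Fin m → ℝ)))
      = {x : EuclideanSpace ℝ (Fin (m+1)) | 0 ≤ x (Fin.last m)} := by
    ext x
    simp [Set.mem_prod, hT1]
  have htrans : ∫ x in {x : EuclideanSpace ℝ (Fin (m+1)) | 0 ≤ x (Fin.last m)}, ((g x) ^ m)⁻¹
      = ∫ z in Ici (0:ℝ) ×ˢ (univ : Set (Fin m → ℝ)), G z := by
    simp only [hGcomp]
    rw [← hpre]
    exact hTmp.setIntegral_preimage_emb T.measurableEmbedding _ _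
  -- integrability on the half product space
  have hGint : Integrable G ((volume.restrict (Ici (0:ℝ))).prod volume) := by
    have hmeasG : Measurable G := by
      rw [hG]
      apply Measurable.inv
      apply Measurable.pow_const
      apply Measurable.add
      · exact Finset.measurable_sum _ fun i _ =>
          ((measurable_pi_apply i).comp measurable_snd).pow_const 2
      · exact (measurable_const.add measurable_fst).pow_const 2
    haveI hHaar : (volume : Measure (ℝ × (Fin m → ℝ))).IsAddHaarMeasure := by
      rw [Measure.volume_eq_prod]; infer_instance
    have hb : Integrable (fun z : ℝ × (Fin m → ℝ) => ((‖z‖ ^ 2 + ε ^ 2)⁻¹) ^ m) volume := by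
      apply aux_integrable volume hε (k := m)
      · rw [Module.finrank_prod, finrank_self, finrank_pi ℝ, Fintype.card_fin]
        omega
      · exact ((((measurable_norm.pow_const 2).add_const
          (ε ^ 2)).inv).pow_const m).aestronglyMeasurable
      · intro x; rw [abs_of_nonneg (by positivity)]
    have hmeq : ((volume.restrict (Ici (0:ℝ))).prod (volume : Measure (Fin m → ℝ)))
        = (volume.prod volume).restrict (Ici (0:ℝ) ×ˢ univ) := by
      rw [← Measure.prod_restrict, Measure.restrict_univ]
    rw [hmeq, ← Measure.volume_eq_prod]
    refine Integrable.mono' hb.restrict hmeasG.aestronglyMeasurable ?_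
    rw [ae_restrict_iff' (measurableSet_Ici.prod MeasurableSet.univ)]
    filter_upwards with z hz
    obtain ⟨hz1, -⟩ := hz
    have hz1' : (0:ℝ) ≤ z.1 := hz1
    have hS0 : (0:ℝ) ≤ ∑ i, z.2 i ^ 2 := Finset.sum_nonneg fun i _ => sq_nonneg _
    have h1 : ‖z.2‖ ^ 2 ≤ ∑ i, z.2 i ^ 2 := by
      have hn : ‖z.2‖ ≤ Real.sqrt (∑ i, z.2 i ^ 2) :=
        (pi_norm_le_iff_of_nonneg (Real.sqrt_nonneg _)).2 fun i =>
          Real.abs_le_sqrt (Finset.single_le_sum (fun j _ => sq_nonneg (z.2 j))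
            (Finset.mem_univ i))
      calc ‖z.2‖ ^ 2 ≤ Real.sqrt (∑ i, z.2 i ^ 2) ^ 2 :=
            pow_le_pow_left₀ (norm_nonneg _) hn 2
        _ = ∑ i, z.2 i ^ 2 := Real.sq_sqrt hS0
    have h2 : ‖z.1‖ ^ 2 = z.1 ^ 2 := by rw [Real.norm_eq_abs, sq_abs]
    have h3 : ‖z‖ ^ 2 + ε ^ 2 ≤ ∑ i, z.2 i ^ 2 + (ε + z.1) ^ 2 := by
      have hzn : ‖z‖ ^ 2 ≤ ∑ i, z.2 i ^ 2 + z.1 ^ 2 := by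
        rcases max_cases ‖z.1‖ ‖z.2‖ with ⟨h, -⟩ | ⟨h, -⟩ <;>
          rw [Prod.norm_def, h] <;> nlinarith [h1, h2, hS0, sq_nonneg z.1]
      nlinarith [hε, hz1']
    have hpos : (0:ℝ) < ‖z‖ ^ 2 + ε ^ 2 := by positivity
    have hGval : G z = ((∑ i, z.2 i ^ 2 + (ε + z.1) ^ 2) ^ m)⁻¹ := rfl
    have hGnn : 0 ≤ G z := by rw [hGval]; positivity
    rw [Real.norm_eq_abs, abs_of_nonneg hGnn, hGval, inv_pow]
    exact inv_anti₀ (by positivity) (pow_le_pow_left₀ hpos.le h3 m)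
  have hfub : ∫ z in Ici (0:ℝ) ×ˢ (univ : Set (Fin m → ℝ)), G z
      = ∫ t in Ici (0:ℝ), ∫ y : Fin m → ℝ, G (t, y) := by
    rw [Measure.volume_eq_prod, ← Measure.prod_restrict, Measure.restrict_univ]
    exact integral_prod _ hGint
  set C : ℝ := ∫ y : Fin m → ℝ, ((∑ i, y i ^ 2 + 1) ^ m)⁻¹ with hC
  have hinner : ∀ t ∈ Ici (0:ℝ), (fun t => ∫ y : Fin m → ℝ, G (t, y)) t
      = (fun t => ((ε + t) ^ m)⁻¹ * C) t := by
    intro t ht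
    have ht' : (0:ℝ) ≤ t := ht
    have hc : 0 < ε + t := by linarith
    simp only
    calc ∫ y : Fin m → ℝ, G (t, y)
        = ∫ y : Fin m → ℝ, ((∑ i, y i ^ 2 + (ε + t) ^ 2) ^ m)⁻¹ := rfl
      _ = ((ε + t) ^ (2 * m))⁻¹ * (ε + t) ^ m * C := aux_scaling m m hc
      _ = ((ε + t) ^ m)⁻¹ * C := by
          rw [two_mul, pow_add]
          have : (ε + t) ^ m ≠ 0 := by positivity
          field_simp
  have houter : ∫ t in Ici (0:ℝ), ∫ y : Fin m → ℝ, G (t, y)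
      = (ε ^ (m - 1) * ((m:ℝ) - 1))⁻¹ * C := by
    rw [setIntegral_congr_fun measurableSet_Ici hinner, integral_mul_const,
      integral_Ici_eq_integral_Ioi]
    have hshift : ∫ t in Ioi (0:ℝ), ((ε + t) ^ m)⁻¹ = ∫ s in Ioi ε, ((s:ℝ) ^ m)⁻¹ := by
      have h := (measurePreserving_add_right volume ε).setIntegral_preimage_emb
        (measurableEmbedding_addRight ε) (fun s : ℝ => (s ^ m)⁻¹) (Ioi ε)
      have hpre2 : (fun x : ℝ => x + ε) ⁻¹' Ioi ε = Ioi 0 := by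
        ext t; simp [lt_add_iff_pos_left]
      rw [hpre2] at h
      rw [← h]
      exact setIntegral_congr_fun measurableSet_Ioi fun t ht => by rw [add_comm]
    have hrpow : ∫ s in Ioi ε, ((s:ℝ) ^ m)⁻¹ = ∫ s in Ioi ε, (s:ℝ) ^ (-(m:ℝ)) := by
      apply setIntegral_congr_fun measurableSet_Ioi
      intro s hs
      have hs0 : (0:ℝ) < s := lt_trans hε hs
      simp only
      rw [Real.rpow_neg hs0.le, Real.rpow_natCast]
    have hval : ∫ s in Ioi ε, (s:ℝ) ^ (-(m:ℝ)) = -ε ^ (-(m:ℝ) + 1) / (-(m:ℝ) + 1) :=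
      integral_Ioi_rpow_of_lt (by linarith [hm1]) hε
    rw [hshift, hrpow, hval]
    have h1 : ε ^ (-(m:ℝ) + 1) = (ε ^ (m - 1 : ℕ))⁻¹ := by
      rw [← Real.rpow_natCast ε (m - 1), ← Real.rpow_neg hε.le]
      congr 1
      rw [Nat.cast_sub (by omega : 1 ≤ m)]
      ring
    rw [h1]
    congr 1
    rw [show (-(m:ℝ)+1) = -((m:ℝ)-1) from by ring, div_neg, neg_div, neg_neg,
      div_eq_mul_inv, mul_inv]
  have hRHSint : ∀ y : EuclideanSpace ℝ (Fin m),
      ((ε / (∑ i, y i ^ 2 + ε ^ 2)) ^ (((↑(m+1):ℝ) - 2) / 2)) ^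
          ((2 * ((↑(m+1):ℝ) - 1)) / ((↑(m+1):ℝ) - 2))
        = ε ^ m * ((∑ i, y i ^ 2 + ε ^ 2) ^ m)⁻¹ := by
    intro y
    have hys : (0:ℝ) ≤ ∑ i, y i ^ 2 := Finset.sum_nonneg fun i _ => sq_nonneg _
    have hd : (0:ℝ) < ∑ i, y i ^ 2 + ε ^ 2 := by positivity
    have hbase : (0:ℝ) ≤ ε / (∑ i, y i ^ 2 + ε ^ 2) := by positivity
    have hexp : ((((m:ℝ)+1) - 2) / 2) * ((2 * (((m:ℝ)+1) - 1)) / (((m:ℝ)+1) - 2))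
        = (m:ℝ) := by
      rw [show ((m:ℝ)+1) - 2 = (m:ℝ) - 1 by ring]
      field_simp
      ring
    calc ((ε / (∑ i, y i ^ 2 + ε ^ 2)) ^ (((↑(m+1):ℝ) - 2) / 2)) ^
          ((2 * ((↑(m+1):ℝ) - 1)) / ((↑(m+1):ℝ) - 2))
        = (ε / (∑ i, y i ^ 2 + ε ^ 2)) ^
            ((((↑(m+1):ℝ) - 2) / 2) * ((2 * ((↑(m+1):ℝ) - 1)) / ((↑(m+1):ℝ) - 2))) := by
          rw [← Real.rpow_mul hbase]
      _ = (ε / (∑ i, y i ^ 2 + ε ^ 2)) ^ ((m:ℕ):ℝ) := by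
          rw [show ((↑(m+1):ℝ)) = (m:ℝ)+1 by push_cast; ring, hexp]
      _ = (ε / (∑ i, y i ^ 2 + ε ^ 2)) ^ (m:ℕ) := Real.rpow_natCast _ m
      _ = ε ^ m * ((∑ i, y i ^ 2 + ε ^ 2) ^ m)⁻¹ := by
          rw [div_pow, div_eq_mul_inv]
  have htr2 : ∫ y : EuclideanSpace ℝ (Fin m), ε ^ m * ((∑ i, y i ^ 2 + ε ^ 2) ^ m)⁻¹
      = ∫ z : Fin m → ℝ, ε ^ m * ((∑ i, z i ^ 2 + ε ^ 2) ^ m)⁻¹ := by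
    have h := (EuclideanSpace.volume_preserving_symm_measurableEquiv_toLp (Fin m)).integral_comp
      (MeasurableEquiv.toLp 2 (Fin m → ℝ)).symm.measurableEmbedding
      (fun z : Fin m → ℝ => ε ^ m * ((∑ i, z i ^ 2 + ε ^ 2) ^ m)⁻¹)
    rw [← h]
    rfl
  rw [htrans, hfub, houter]
  simp only [hRHSint]
  rw [htr2, integral_const_mul, aux_scaling m m hε, ← hC]
  rw [hK]
  have hne1 : ε ^ (m - 1 : ℕ) ≠ 0 := by positivity
  have hne2 : ε ^ m ≠ 0 := by positivity
  have hne3 : ε ^ (2 * m) ≠ 0 := by positivity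
  push_cast
  field_simp
  ring
end
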